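/- Let P = t² + b t + c ∈ 𝕊[t] with Re(b) = 0 and b b̄ < 0, and suppose λ, μ ∈ ℝ with c = λ + μ b. Then the real norm polynomial satisfies P P̄ = (t² + λ)² + (t + μ)² b b̄ = (t² + λ + √(-b b̄)(t + μ))(t² + λ - √(-b b̄)(t + μ)). -/

import Mathlib

open Polynomial

notation "𝕊" => QuaternionAlgebra ℝ (-1) 0 1

/-- For `P = t² + b t + c` with `Re b = 0`, `b b̄ < 0` and `c = λ + μ b`, the
norm polynomial factors as
`P P̄ = (t² + λ)² + (t + μ)² b b̄ = (t² + λ + √(-b b̄)(t + μ))(t² + λ - √(-b b̄)(t + μ))`. -/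
theorem norm_polynomial_factorization (b : 𝕊) (hb0 : b.re = 0)
    (n : ℝ) (hn : b * star b = (n : 𝕊)) (hneg : n < 0)
    (lam mu : ℝ) (c : 𝕊) (hc : c = (lam : 𝕊) + (mu : 𝕊) * b) :
    (X ^ 2 + C b * X + C c) * (X ^ 2 + C (star b) * X + C (star c)) =
        (X ^ 2 + C ((lam : ℝ) : 𝕊)) ^ 2 +
          (X + C ((mu : ℝ) : 𝕊)) ^ 2 * C ((n : ℝ) : 𝕊) ∧
    (X ^ 2 + C b * X + C c) * (X ^ 2 + C (star b) * X + C (star c)) =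
        (X ^ 2 + C ((lam : ℝ) : 𝕊) +
            C ((Real.sqrt (-n) : ℝ) : 𝕊) * (X + C ((mu : ℝ) : 𝕊))) *
          (X ^ 2 + C ((lam : ℝ) : 𝕊) -
            C ((Real.sqrt (-n) : ℝ) : 𝕊) * (X + C ((mu : ℝ) : 𝕊))) := by
  have hstarb : star b = -b := by
    rw [QuaternionAlgebra.star_eq_two_re_sub, hb0]; simp
  have hbb : b * b = ((-n : ℝ) : 𝕊) := by
    have h : b * b = -(b * star b) := by rw [hstarb, mul_neg, neg_neg]
    rw [h, hn]; simp
  have hstarc : star c = (lam : 𝕊) - (mu : 𝕊) * b := by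
    rw [hc]
    simp [star_mul, hstarb, sub_eq_add_neg, QuaternionAlgebra.coe_commutes]
  set φ : ℝ[X] →+* 𝕊 := (Polynomial.aeval b : ℝ[X] →ₐ[ℝ] 𝕊).toRingHom with hφ
  set Φ : (ℝ[X])[X] →+* (𝕊)[X] := Polynomial.mapRingHom φ with hΦ
  have hφX : φ X = b := by simp [hφ]
  have hφC : ∀ r : ℝ, φ (Polynomial.C r) = (r : 𝕊) := by
    intro r; simp [hφ, QuaternionAlgebra.coe_algebraMap]
  have hΦX : Φ X = X := by simp [hΦ]
  have hΦC : ∀ p : ℝ[X], Φ (C p) = C (φ p) := by intro p; simp [hΦ]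
  have key : (X ^ 2 + C (X : ℝ[X]) * X + C (Polynomial.C lam + Polynomial.C mu * X)) *
      (X ^ 2 + C (-(X : ℝ[X])) * X + C (Polynomial.C lam - Polynomial.C mu * X)) =
      (X ^ 2 + C (Polynomial.C lam : ℝ[X])) ^ 2 +
        (X + C (Polynomial.C mu : ℝ[X])) ^ 2 * C (Polynomial.C n) -
        C ((X : ℝ[X]) ^ 2 + Polynomial.C n) * (X + C (Polynomial.C mu : ℝ[X])) ^ 2 := by
    simp only [map_add, map_sub, map_mul, map_neg, map_pow]
    ring
  have happ := congrArg Φ key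
  simp only [map_mul, map_add, map_sub, map_pow, map_neg, hΦX, hΦC, hφX, hφC] at happ
  have hz2 : (C b : 𝕊[X]) ^ 2 + C ((n : ℝ) : 𝕊) = 0 := by
    rw [sq, ← C_mul, hbb, ← C_add]
    simp
  rw [hz2, zero_mul, sub_zero] at happ
  have h1 : (X ^ 2 + C b * X + C c) * (X ^ 2 + C (star b) * X + C (star c)) =
      (X ^ 2 + C ((lam : ℝ) : 𝕊)) ^ 2 + (X + C ((mu : ℝ) : 𝕊)) ^ 2 * C ((n : ℝ) : 𝕊) := by
    rw [hstarb, hstarc, hc]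
    simp only [C_add, C_sub, C_mul, C_neg]
    convert happ using 2
  refine ⟨h1, ?_⟩
  rw [h1]
  have hcent : ∀ (r : ℝ) (p : 𝕊[X]), Commute (C ((r : ℝ) : 𝕊)) p := by
    intro r p
    have : (C ((r : ℝ) : 𝕊) : 𝕊[X]) = algebraMap ℝ (𝕊[X]) r := by
      rw [Polynomial.algebraMap_apply, QuaternionAlgebra.coe_algebraMap]
    rw [this]
    exact Algebra.commutes r p
  set A : (𝕊)[X] := X ^ 2 + C ((lam : ℝ) : 𝕊) with hA
  set P : (𝕊)[X] := X + C ((mu : ℝ) : 𝕊) with hP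
  set B : (𝕊)[X] := C ((Real.sqrt (-n) : ℝ) : 𝕊) * P with hB
  have hcomm : Commute A B :=
    Commute.add_left ((Polynomial.commute_X B).pow_left 2) (hcent lam B)
  have hs : ((Real.sqrt (-n) : ℝ) : 𝕊) * ((Real.sqrt (-n) : ℝ) : 𝕊) = ((-n : ℝ) : 𝕊) := by
    rw [← QuaternionAlgebra.coe_mul, Real.mul_self_sqrt (by linarith)]
  have hBB : B * B = -(P ^ 2 * C ((n : ℝ) : 𝕊)) := by
    rw [hB, Commute.mul_mul_mul_comm ((hcent _ P).symm), ← C_mul, hs]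
    have hneg' : (((-n : ℝ) : 𝕊) : 𝕊) = -((n : ℝ) : 𝕊) := by simp
    rw [hneg', ← sq, map_neg, neg_mul, (hcent n (P ^ 2)).eq]
  rw [← hcomm.mul_self_sub_mul_self_eq, hBB, sub_neg_eq_add, ← sq]
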